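/- Let (G',H') = altan(G,H) with |H| = h odd, and let q be a kernel eigenvector of G' such that q vanishes on all vertices of G and on all perimeter vertices x_1,...,x_h. Then q also vanishes on all perimeter vertices y_1,...,y_h, hence q = 0. -/

import Mathlib

open scoped Classical

/-- The nullity of a graph: dimension of the kernel of its real adjacency matrix. -/
noncomputable def nullity {V : Type*} [Fintype V] (G : SimpleGraph V) : ℕ :=
  letI := Classical.decEq V
  letI := Classical.decRel G.Adj
  Module.finrank ℝ ↥(LinearMap.ker (Matrix.toLin' (G.adjMatrix ℝ)))

/-- `q` is a kernel eigenvector of `G`: the sum of `q` over each neighbourhood is `0`. -/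
def IsKernelVector {V : Type*} [Fintype V] (G : SimpleGraph V) (q : V → ℝ) : Prop :=
  ∀ v : V, ∑ u : V, (if G.Adj v u then q u else 0) = 0

/-- Underlying relation of the altan construction: vertices are `V ⊕ (Fin h ⊕ Fin h)`,
where `Sum.inr (Sum.inl i)` is `x_{i+1}` and `Sum.inr (Sum.inr i)` is `y_{i+1}`
(0-indexed versions of the 1-indexed `x_i, y_i`). -/
def altanRel {V : Type*} {h : ℕ} [NeZero h] (G : SimpleGraph V) (H : Fin h → V) :
    (V ⊕ (Fin h ⊕ Fin h)) → (V ⊕ (Fin h ⊕ Fin h)) → Prop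
  | Sum.inl u, Sum.inl w => G.Adj u w
  | Sum.inl u, Sum.inr (Sum.inl i) => u = H i
  | Sum.inr (Sum.inl i), Sum.inr (Sum.inr j) => j = i ∨ i = j + 1
  | _, _ => False

/-- The altan of `(G, H)`. -/
def altan {V : Type*} {h : ℕ} [NeZero h] (G : SimpleGraph V) (H : Fin h → V) :
    SimpleGraph (V ⊕ (Fin h ⊕ Fin h)) :=
  SimpleGraph.fromRel (altanRel G H)

/-- The special vector: `s(y_i) = (-1)^i` (1-indexed), `0` elsewhere. -/
def specialVector (V : Type*) (h : ℕ) : (V ⊕ (Fin h ⊕ Fin h)) → ℝ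
  | Sum.inr (Sum.inr j) => (-1 : ℝ) ^ ((j : ℕ) + 1)
  | _ => 0

/-- The induced attachment set `H' = (y_1, ..., y_h)` of the altan. -/
def inducedAttachment (V : Type*) (h : ℕ) : Fin h → (V ⊕ (Fin h ⊕ Fin h)) :=
  fun i => Sum.inr (Sum.inr i)

/-- for odd attachment size, a kernel eigenvector of the altan vanishing on
`V(G)` and on all `x_i` also vanishes on all `y_i`, hence is zero. -/
theorem stmt6 {V : Type*} [Fintype V] {h : ℕ} [NeZero h] (hh : 2 ≤ h) (hodd : Odd h)
    (G : SimpleGraph V) (H : Fin h → V) (q : (V ⊕ (Fin h ⊕ Fin h)) → ℝ)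
    (hq : IsKernelVector (altan G H) q)
    (hV : ∀ u : V, q (Sum.inl u) = 0)
    (hx : ∀ i : Fin h, q (Sum.inr (Sum.inl i)) = 0) :
    (∀ i : Fin h, q (Sum.inr (Sum.inr i)) = 0) ∧ q = 0 := by
  classical
  set f : Fin h → ℝ := fun j => q (Sum.inr (Sum.inr j)) with hf
  have h10 : (1 : Fin h) ≠ 0 := by
    intro h0
    rw [Fin.one_eq_zero_iff] at h0
    omega
  have hne : ∀ i : Fin h, i - 1 ≠ i := by
    intro i hcon
    apply h10
    have h2 : i - 1 + 1 = i + 1 := by rw [hcon]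
    simpa using h2
  have hadj : ∀ i j : Fin h,
      (altan G H).Adj (Sum.inr (Sum.inl i)) (Sum.inr (Sum.inr j)) ↔ (j = i ∨ j = i - 1) := by
    intro i j
    open Fin.CommRing in
    have : (i = j + 1) ↔ (j = i - 1) := by
      constructor
      · intro hji; rw [hji]; ring_nf
      · intro hji; rw [hji]; ring_nf
    simp [altan, altanRel, SimpleGraph.fromRel_adj, this]
  have key : ∀ i : Fin h, f i + f (i - 1) = 0 := by
    intro i
    have h0 := hq (Sum.inr (Sum.inl i))
    rw [Fintype.sum_sum_type] at h0
    have e1 : ∑ u : V, (if (altan G H).Adj (Sum.inr (Sum.inl i)) (Sum.inl u) then q (Sum.inl u) else 0) = 0 := by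
      apply Finset.sum_eq_zero; intro u _; simp [hV]
    rw [e1, zero_add, Fintype.sum_sum_type] at h0
    have e2 : ∑ j : Fin h, (if (altan G H).Adj (Sum.inr (Sum.inl i)) (Sum.inr (Sum.inl j)) then q (Sum.inr (Sum.inl j)) else 0) = 0 := by
      apply Finset.sum_eq_zero; intro j _; simp [hx]
    rw [e2, zero_add] at h0
    calc f i + f (i - 1)
        = ∑ j : Fin h, (if (altan G H).Adj (Sum.inr (Sum.inl i)) (Sum.inr (Sum.inr j)) then q (Sum.inr (Sum.inr j)) else 0) := by
          rw [show (∑ j : Fin h, (if (altan G H).Adj (Sum.inr (Sum.inl i)) (Sum.inr (Sum.inr j)) then q (Sum.inr (Sum.inr j)) else 0))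
              = ∑ j : Fin h, ((if j = i then f j else 0) + (if j = i - 1 then f j else 0)) from ?_]
          · rw [Finset.sum_add_distrib, Finset.sum_ite_eq', Finset.sum_ite_eq']
            simp
          · apply Finset.sum_congr rfl
            intro j _
            rw [if_congr (hadj i j) rfl rfl]
            by_cases h1 : j = i <;> by_cases h2 : j = i - 1 <;>
              simp_all [hne i]
      _ = 0 := h0
  have step : ∀ j : Fin h, f (j + 1) = - f j := by
    intro j
    have := key (j + 1)
    rw [add_sub_cancel_right] at this
    linarith
  open Fin.CommRing in
  have pow : ∀ n : ℕ, f ((n : Fin h)) = (-1 : ℝ) ^ n * f 0 := by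
    intro n
    induction n with
    | zero => simp
    | succ n ih =>
      rw [Nat.cast_add, Nat.cast_one, step, ih, pow_succ]
      ring
  open Fin.CommRing in
  have h00 : f 0 = 0 := by
    have := pow h
    rw [Fin.natCast_self, hodd.neg_one_pow] at this
    linarith
  open Fin.CommRing in
  have hall : ∀ i : Fin h, f i = 0 := by
    intro i
    have := pow i.val
    rw [Fin.cast_val_eq_self, h00, mul_zero] at this
    exact this
  refine ⟨hall, ?_⟩
  funext x
  rcases x with u | (i | j)
  · exact hV u
  · exact hx i
  · exact hall j
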